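/- For integers n ≥ k + 2 and 2 ≤ k ≤ ⌊n/2⌋, the independence number of the k-th power of the n-cycle satisfies α(C_n^k) = ⌊n/(k+1)⌋. -/

import Mathlib

/-- The independence number of a graph: the clique number of the complement. -/
noncomputable def SimpleGraph.indepNum' {V : Type*} (G : SimpleGraph V) : ℕ :=
  Gᶜ.cliqueNum

/-- The `k`-th power of the `n`-cycle: vertices are `ZMod n`, and distinct `x, y` are
adjacent iff `min{|x-y|, n-|x-y|} ≤ k` (here `(x-y).val` and `(y-x).val` are the two
circular distances). -/
def cyclePower (n k : ℕ) : SimpleGraph (ZMod n) where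
  Adj x y := x ≠ y ∧ min (x - y).val (y - x).val ≤ k
  symm := by
    constructor
    rintro x y ⟨h1, h2⟩
    exact ⟨h1.symm, by rwa [min_comm]⟩
  loopless := by
    constructor
    rintro x ⟨h, -⟩
    exact h rfl

/-- If `x - y = ↑d` with `k < d` and `d + k < n`, then `x, y` are adjacent in the
complement of `cyclePower n k`. -/
lemma compl_adj_of_gap (n k : ℕ) [NeZero n] (x y : ZMod n) (d : ℕ)
    (hxy : x - y = (d : ZMod n)) (hd1 : k < d) (hd2 : d + k < n) :
    (cyclePower n k)ᶜ.Adj x y := by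
  have hdn : d < n := by omega
  have hval1 : (x - y).val = d := by rw [hxy, ZMod.val_natCast_of_lt hdn]
  have hyx : y - x = ((n - d : ℕ) : ZMod n) := by
    have h0 : ((n - d : ℕ) : ZMod n) + (d : ZMod n) = ((n : ℕ) : ZMod n) := by
      rw [← Nat.cast_add]; congr 1; omega
    rw [ZMod.natCast_self] at h0
    linear_combination -hxy - h0
  have hval2 : (y - x).val = n - d := by
    rw [hyx, ZMod.val_natCast_of_lt (by omega)]
  have hne : x ≠ y := by
    intro h
    rw [h, sub_self, ZMod.val_zero] at hval1
    omega
  rw [SimpleGraph.compl_adj]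
  refine ⟨hne, fun h => ?_⟩
  rw [cyclePower] at h
  simp only at h
  obtain ⟨-, hmin⟩ := h
  rw [hval1, hval2] at hmin
  omega

theorem stmt_14 (n k : ℕ) (hnk : k + 2 ≤ n) (hk2 : 2 ≤ k) (hk : k ≤ n / 2) :
    (cyclePower n k).indepNum' = n / (k + 1) := by
  haveI : NeZero n := ⟨by omega⟩
  set m := n / (k + 1) with hm
  have hm1 : 1 ≤ m := Nat.one_le_div_iff (by omega) |>.2 (by omega)
  have hmn : m * (k + 1) ≤ n := Nat.div_mul_le_self n (k + 1)
  have hkn : k + 1 < n := by omega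
  have hadj : ∀ x y : ZMod n, (cyclePower n k)ᶜ.Adj x y →
      k < (x - y).val ∧ k < (y - x).val := by
    intro x y h
    rw [SimpleGraph.compl_adj] at h
    obtain ⟨hne, hna⟩ := h
    rw [cyclePower] at hna
    simp only [not_and, not_le] at hna
    have := hna hne
    omega
  rw [SimpleGraph.indepNum']
  apply le_antisymm
  · -- upper bound
    show sSup {c | ∃ s, ((cyclePower n k)ᶜ).IsNClique c s} ≤ m
    refine csSup_le ⟨0, ∅, SimpleGraph.isNClique_empty.mpr rfl⟩ ?_
    rintro c ⟨s, hs⟩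
    set I : ZMod n → Finset (ZMod n) :=
      fun x => (Finset.range (k + 1)).image (fun a : ℕ => x + (a : ZMod n)) with hI
    have hcardI : ∀ x, (I x).card = k + 1 := by
      intro x
      rw [hI]
      simp only
      rw [Finset.card_image_of_injOn, Finset.card_range]
      intro a ha b hb hab
      simp only [Finset.coe_range, Set.mem_Iio] at ha hb
      have h1 : (a : ZMod n) = (b : ZMod n) := by
        have := hab; simpa using this
      have h2 := congrArg ZMod.val h1
      rwa [ZMod.val_natCast_of_lt (by omega), ZMod.val_natCast_of_lt (by omega)] at h2
    have hdisj : ∀ x ∈ s, ∀ y ∈ s, x ≠ y → Disjoint (I x) (I y) := by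
      intro x hx y hy hne
      rw [Finset.disjoint_left]
      intro z hzx hzy
      rw [hI] at hzx hzy
      simp only [Finset.mem_image, Finset.mem_range] at hzx hzy
      obtain ⟨a, ha, hax⟩ := hzx
      obtain ⟨b, hb, hby⟩ := hzy
      have hadj' := hadj x y (hs.isClique hx hy hne)
      have hxy : x - y = (b : ZMod n) - (a : ZMod n) := by
        linear_combination hax - hby
      rcases le_total a b with hab | hab
      · have h3 : x - y = ((b - a : ℕ) : ZMod n) := by
          rw [Nat.cast_sub hab]; exact hxy
        have h4 := congrArg ZMod.val h3
        rw [ZMod.val_natCast_of_lt (by omega)] at h4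
        omega
      · have h3 : y - x = ((a - b : ℕ) : ZMod n) := by
          rw [Nat.cast_sub hab]; linear_combination -hxy
        have h4 := congrArg ZMod.val h3
        rw [ZMod.val_natCast_of_lt (by omega)] at h4
        omega
    have hcard : (s.biUnion I).card = c * (k + 1) := by
      rw [Finset.card_biUnion hdisj]
      rw [Finset.sum_congr rfl (fun x _ => hcardI x), Finset.sum_const, hs.card_eq,
        smul_eq_mul]
    have hle : c * (k + 1) ≤ n := by
      rw [← hcard]
      calc (s.biUnion I).card ≤ Fintype.card (ZMod n) := Finset.card_le_univ _
        _ = n := ZMod.card n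
    exact Nat.le_div_iff_mul_le (by omega) |>.2 hle
  · -- lower bound
    set f : ℕ → ZMod n := fun i => ((i * (k + 1) : ℕ) : ZMod n) with hf
    have hlt : ∀ i < m, i * (k + 1) < n := by
      intro i hi
      calc i * (k + 1) < m * (k + 1) :=
            (Nat.mul_lt_mul_right (show 0 < k + 1 by omega)).2 hi
        _ ≤ n := hmn
    have hsm : m * (k + 1) = (m - 1) * (k + 1) + (k + 1) := by
      conv_lhs => rw [← Nat.succ_pred_eq_of_pos hm1]
      rw [Nat.succ_mul, Nat.pred_eq_sub_one]
    have hgap : ∀ i j, i < j → j < m → (cyclePower n k)ᶜ.Adj (f j) (f i) := by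
      intro i j hij hjm
      have hle' : i * (k + 1) ≤ j * (k + 1) := Nat.mul_le_mul_right _ hij.le
      apply compl_adj_of_gap n k _ _ ((j - i) * (k + 1))
      · rw [hf]
        simp only
        rw [Nat.sub_mul, Nat.cast_sub hle']
      · have : 1 ≤ j - i := by omega
        calc k < k + 1 := by omega
          _ ≤ (j - i) * (k + 1) := Nat.le_mul_of_pos_left _ (by omega)
      · have hji : j - i ≤ m - 1 := by omega
        have h5 : (j - i) * (k + 1) ≤ (m - 1) * (k + 1) :=
          Nat.mul_le_mul_right _ hji
        omega
    have hinj : Set.InjOn f (Finset.range m) := by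
      intro i hi j hj hij
      simp only [Finset.coe_range, Set.mem_Iio] at hi hj
      have h6 := congrArg ZMod.val hij
      rw [hf] at h6
      simp only at h6
      rw [ZMod.val_natCast_of_lt (hlt i hi), ZMod.val_natCast_of_lt (hlt j hj)] at h6
      exact Nat.eq_of_mul_eq_mul_right (by omega) h6
    set S : Finset (ZMod n) := (Finset.range m).image f with hS
    have hclique : (cyclePower n k)ᶜ.IsClique S := by
      intro x hx y hy hne
      simp only [hS, Finset.coe_image, Set.mem_image, Finset.mem_coe,
        Finset.mem_range, Finset.coe_range, Set.mem_Iio] at hx hy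
      obtain ⟨i, hi, rfl⟩ := hx
      obtain ⟨j, hj, rfl⟩ := hy
      have hij : i ≠ j := fun h => hne (by rw [h])
      rcases Nat.lt_or_ge i j with h | h
      · exact ((hgap i j h hj).symm)
      · exact hgap j i (by omega) hi
    have hcardS : S.card = m := by
      rw [hS, Finset.card_image_of_injOn hinj, Finset.card_range]
    have := SimpleGraph.IsClique.card_le_cliqueNum (tc := hclique)
    omega
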